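/- For every infinite cardinal κ and every natural number n ≥ 1, the cardinal (beth_{n-1}(κ))^+ satisfies (beth_{n-1}(κ))^+ → (κ^+)^n_κ: every coloring of n-element subsets of a set of size (beth_{n-1}(κ))^+ with κ colors admits a homogeneous subset of size κ^+. -/

import Mathlib

open Cardinal Ordinal Set

namespace ErdosRado

variable {α C : Type} [DecidableEq α] {W : Type} [LinearOrder W] [WellFoundedLT W]

/-- The candidate set at stage `w`: elements not yet chosen whose colour behaviour over
index sets below `w` matches that of `x`. -/
def Qset (c : Finset α → C) (n : ℕ) (x : α) (g : W → α) (w : W) : Set α :=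
  {a | (∀ v, v < w → g v ≠ a) ∧
    ∀ I : Finset W, ↑I ⊆ Set.Iio w → I.card = n →
      c (insert a (I.image g)) = c (insert x (I.image g))}

theorem Qset_congr (c : Finset α → C) (n : ℕ) (x : α) {g g' : W → α} {w : W}
    (h : ∀ v, v < w → g v = g' v) : Qset c n x g w = Qset c n x g' w := by
  have himg : ∀ I : Finset W, ↑I ⊆ Set.Iio w → I.image g = I.image g' := by
    intro I hI
    apply Finset.image_congr
    intro i hi
    exact h i (hI hi)
  ext a
  constructor <;> rintro ⟨h1, h2⟩ <;> refine ⟨fun v hv => ?_, fun I hI hcard => ?_⟩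
  · rw [← h v hv]; exact h1 v hv
  · rw [← himg I hI]; exact h2 I hI hcard
  · rw [h v hv]; exact h1 v hv
  · rw [himg I hI]; exact h2 I hI hcard

theorem some_congr {S T : Set α} (h : S = T) (hS : S.Nonempty) (hT : T.Nonempty) :
    hS.some = hT.some := by subst h; rfl

noncomputable def seq (c : Finset α → C) (n : ℕ) (x : α) : W → α :=
  (wellFounded_lt (α := W)).fix
    (fun w ih =>
      (Set.insert_nonempty x
        (Qset c n x (fun v => if hv : v < w then ih v hv else x) w)).some)

theorem seq_eq (c : Finset α → C) (n : ℕ) (x : α) (w : W) :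
    seq c n x w =
      (Set.insert_nonempty x (Qset c n x (seq c n x) w)).some := by
  conv_lhs => rw [seq, WellFounded.fix_eq]
  refine some_congr ?_ _ _
  congr 1
  exact Qset_congr c n x fun v hv => by rw [dif_pos hv, seq]

theorem seq_mem_insert (c : Finset α → C) (n : ℕ) (x : α) (w : W) :
    seq c n x w ∈ insert x (Qset c n x (seq c n x) w) := by
  rw [seq_eq]; exact Set.Nonempty.some_mem _

theorem x_mem_Qset (c : Finset α → C) (n : ℕ) (x : α) (w : W)
    (hw : ∀ v, v < w → seq c n x v ≠ x) : x ∈ Qset c n x (seq c n x) w :=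
  ⟨hw, fun _ _ _ => rfl⟩

theorem seq_mem_Qset (c : Finset α → C) (n : ℕ) (x : α) (w : W)
    (hw : ∀ v, v < w → seq c n x v ≠ x) : seq c n x w ∈ Qset c n x (seq c n x) w := by
  rcases seq_mem_insert c n x w with h | h
  · rw [h]; exact x_mem_Qset c n x w hw
  · exact h


theorem seq_agree (c : Finset α → C) (n : ℕ) (x y : α) (L : W)
    (hx1 : ∀ v, v < L → seq c n x v ≠ x) (hy1 : ∀ v, v < L → seq c n y v ≠ y)
    (hH : ∀ I : Finset W, ↑I ⊆ Set.Iio L →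
      c (insert x (I.image (seq c n x))) = c (insert y (I.image (seq c n y)))) :
    ∀ w, w ≤ L → seq c n x w = seq c n y w := by
  intro w
  induction w using WellFoundedLT.induction with
  | _ w IH =>
  intro hwL
  have hagree : ∀ v, v < w → seq c n x v = seq c n y v := fun v hv =>
    IH v hv (le_of_lt (lt_of_lt_of_le hv hwL))
  have himg : ∀ I : Finset W, ↑I ⊆ Set.Iio w →
      I.image (seq c n x) = I.image (seq c n y) := by
    intro I hI
    apply Finset.image_congr
    intro i hi
    exact hagree i (hI hi)
  have hQ : Qset c n x (seq c n x) w = Qset c n y (seq c n y) w := by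
    ext a
    constructor <;> rintro ⟨h1, h2⟩ <;> refine ⟨fun v hv => ?_, fun I hI hcard => ?_⟩
    · rw [← hagree v hv]; exact h1 v hv
    · have hIL : ↑I ⊆ Set.Iio L := hI.trans (Set.Iio_subset_Iio hwL)
      calc c (insert a (I.image (seq c n y)))
          = c (insert a (I.image (seq c n x))) := by rw [himg I hI]
        _ = c (insert x (I.image (seq c n x))) := h2 I hI hcard
        _ = c (insert y (I.image (seq c n y))) := hH I hIL
    · rw [hagree v hv]; exact h1 v hv
    · have hIL : ↑I ⊆ Set.Iio L := hI.trans (Set.Iio_subset_Iio hwL)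
      calc c (insert a (I.image (seq c n x)))
          = c (insert a (I.image (seq c n y))) := by rw [himg I hI]
        _ = c (insert y (I.image (seq c n y))) := h2 I hI hcard
        _ = c (insert x (I.image (seq c n x))) := (hH I hIL).symm
  have hxQ : insert x (Qset c n x (seq c n x) w) = Qset c n x (seq c n x) w :=
    Set.insert_eq_self.2 (x_mem_Qset c n x w (fun v hv => hx1 v (lt_of_lt_of_le hv hwL)))
  have hyQ : insert y (Qset c n y (seq c n y) w) = Qset c n y (seq c n y) w :=
    Set.insert_eq_self.2 (x_mem_Qset c n y w (fun v hv => hy1 v (lt_of_lt_of_le hv hwL)))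
  rw [seq_eq, seq_eq]
  exact some_congr (by rw [hxQ, hyQ, hQ]) _ _

theorem eq_of_data (c : Finset α → C) (n : ℕ) (x y : α) (L : W)
    (hxL : seq c n x L = x) (hyL : seq c n y L = y)
    (hx1 : ∀ v, v < L → seq c n x v ≠ x) (hy1 : ∀ v, v < L → seq c n y v ≠ y)
    (hH : ∀ I : Finset W, ↑I ⊆ Set.Iio L →
      c (insert x (I.image (seq c n x))) = c (insert y (I.image (seq c n y)))) : x = y := by
  rw [← hxL, ← hyL]
  exact seq_agree c n x y L hx1 hy1 hH L le_rfl

theorem injective_of_ne (c : Finset α → C) (n : ℕ) (x : α)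
    (h : ∀ w : W, seq (W := W) c n x w ≠ x) : Function.Injective (seq (W := W) c n x) := by
  intro a b hab
  by_contra hne
  rcases lt_trichotomy a b with hlt | heq | hlt
  · exact (seq_mem_Qset c n x b (fun v _ => h v)).1 a hlt hab
  · exact hne heq
  · exact (seq_mem_Qset c n x a (fun v _ => h v)).1 b hlt hab.symm

theorem exists_seq_eq (c : Finset α → C) (n : ℕ) (x : α) (hαW : #α < #W) :
    ∃ w : W, seq (W := W) c n x w = x := by
  by_contra h'
  push_neg at h'
  exact absurd (mk_le_of_injective (injective_of_ne c n x h')) (not_le.2 hαW)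


theorem le_iterate (κ : Cardinal) (m : ℕ) : κ ≤ (fun x : Cardinal => 2 ^ x)^[m] κ := by
  induction m with
  | zero => simp
  | succ m IH =>
    rw [Function.iterate_succ_apply']
    exact IH.trans (cantor _).le

theorem main (κ : Cardinal) (hκ : ℵ₀ ≤ κ) (m : ℕ) :
    ∀ (α C : Type), #α = Order.succ ((fun x : Cardinal => 2 ^ x)^[m] κ) →
      Cardinal.mk C = κ → ∀ f : Finset α → C,
    ∃ X : Set α, Order.succ κ ≤ #X ∧
      ∀ s t : Finset α, ↑s ⊆ X → ↑t ⊆ X → s.card = m + 1 → t.card = m + 1 → f s = f t := by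
  induction m with
  | zero =>
    intro α C hα hC f
    simp only [Function.iterate_zero, id_eq] at hα
    haveI : Nonempty C := ⟨f ∅⟩
    classical
    set g : α → C := fun a => f {a} with hg
    by_cases hex : ∃ b : C, Order.succ κ ≤ #(g ⁻¹' {b})
    · obtain ⟨b, hb⟩ := hex
      refine ⟨g ⁻¹' {b}, hb, ?_⟩
      intro s t hs ht hscard htcard
      obtain ⟨a, rfl⟩ := Finset.card_eq_one.1 hscard
      obtain ⟨a', rfl⟩ := Finset.card_eq_one.1 htcard
      have ha : g a = b := by
        have := hs (Finset.mem_coe.2 (Finset.mem_singleton_self a))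
        simpa using this
      have ha' : g a' = b := by
        have := ht (Finset.mem_coe.2 (Finset.mem_singleton_self a'))
        simpa using this
      rw [show f {a} = g a from rfl, show f {a'} = g a' from rfl, ha, ha']
    · push_neg at hex
      exfalso
      have hfib : ∀ b : C, #(g ⁻¹' {b}) ≤ κ := fun b => Order.lt_succ_iff.1 (hex b)
      have huniv : (⋃ b : C, g ⁻¹' {b}) = Set.univ := by
        ext a; simp
      have hle : #α ≤ κ := by
        calc #α = #(⋃ b : C, g ⁻¹' {b}) := by rw [huniv, mk_univ]
          _ ≤ #C * ⨆ b, #(g ⁻¹' {b}) := mk_iUnion_le _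
          _ ≤ κ * κ := mul_le_mul' (le_of_eq hC) (ciSup_le' hfib)
          _ = κ := mul_eq_self hκ
      rw [hα] at hle
      exact absurd hle (not_le.2 (Order.lt_succ_iff.2 le_rfl))
  | succ m IH =>
    intro α C hα hC f
    classical
    rw [Function.iterate_succ_apply'] at hα
    set μ : Cardinal := (fun x : Cardinal => 2 ^ x)^[m] κ with hμdef
    have hκμ : κ ≤ μ := le_iterate κ m
    have hμ : ℵ₀ ≤ μ := hκ.trans hκμ
    have hμ2 : ℵ₀ ≤ 2 ^ μ := hμ.trans (cantor μ).le
    have hμα : μ < #α := by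
      rw [hα]
      exact (cantor μ).trans (Order.lt_succ _)
    set n : ℕ := m + 1 with hndef
    set ϑ : Ordinal := (Order.succ #α).ord with hθdef
    have hW : #ϑ.ToType = Order.succ #α := by rw [mk_toType, hθdef, card_ord]
    have hαW : #α < #ϑ.ToType := by rw [hW]; exact Order.lt_succ _
    set ν : Ordinal := (Order.succ μ).ord with hνdef
    have hνθ : ν < ϑ := by
      rw [hνdef, hθdef, Cardinal.ord_lt_ord]
      exact Order.succ_lt_succ hμα
    set wstar : ϑ.ToType := Ordinal.ToType.mk ⟨ν, hνθ⟩ with hwstar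
    have htypein : @typein ϑ.ToType (· < ·) isWellOrder_lt wstar = ν := by
      rw [hwstar, Ordinal.ToType.mk_apply]; exact typein_enum _ _
    have hmkIio : ∀ w : ϑ.ToType,
        #(Set.Iio w) = (@typein ϑ.ToType (· < ·) isWellOrder_lt w).card := by
      intro w
      rw [@card_typein ϑ.ToType (· < ·) isWellOrder_lt w]
      rfl
    have hIiowstar : #(Set.Iio wstar) = Order.succ μ := by
      rw [hmkIio, htypein, hνdef, card_ord]
    have hbelow : ∀ w : ϑ.ToType, w < wstar → #(Set.Iio w) ≤ μ := by
      intro w hw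
      rw [hmkIio]
      have h1 : @typein ϑ.ToType (· < ·) isWellOrder_lt w < ν := by
        rw [← htypein]
        exact (@typein_lt_typein ϑ.ToType (· < ·) isWellOrder_lt w wstar).2 hw
      rw [hνdef, Cardinal.lt_ord] at h1
      exact Order.lt_succ_iff.1 h1
    -- the length function
    have hex : ∀ x : α, ∃ w : ϑ.ToType, seq (W := ϑ.ToType) f n x w = x := fun x =>
      exists_seq_eq f n x hαW
    set L : α → ϑ.ToType := fun x =>
      (wellFounded_lt (α := ϑ.ToType)).min
        {w : ϑ.ToType | seq (W := ϑ.ToType) f n x w = x} (hex x) with hLdef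
    have hLmem : ∀ x : α, seq (W := ϑ.ToType) f n x (L x) = x := fun x =>
      (wellFounded_lt (α := ϑ.ToType)).min_mem _ (hex x)
    have hLmin : ∀ x : α, ∀ v : ϑ.ToType, v < L x → seq (W := ϑ.ToType) f n x v ≠ x := by
      intro x v hv hvx
      exact (wellFounded_lt (α := ϑ.ToType)).not_lt_min _ hvx hv
    have hinj : ∀ x : α, ∀ v w : ϑ.ToType, v < w → w ≤ L x →
        seq (W := ϑ.ToType) f n x v ≠ seq (W := ϑ.ToType) f n x w := by
      intro x v w hvw hwL
      refine (seq_mem_Qset f n x w (fun u hu => hLmin x u (lt_of_lt_of_le hu hwL))).1 v hvw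
    -- main claim : some x has a long sequence
    have hmain : ∃ x : α, wstar ≤ L x := by
      by_contra hcon
      push_neg at hcon
      set Δ : Type := Σ w : ↥(Set.Iio wstar), (Finset ↥(Set.Iio w.1) → C) with hΔdef
      set F : α → Δ := fun x =>
        ⟨⟨L x, hcon x⟩, fun J => f (insert x ((J.image Subtype.val).image (seq (W := ϑ.ToType) f n x)))⟩
        with hFdef
      have hsub : ∀ (I : Finset ϑ.ToType) (w : ϑ.ToType), ↑I ⊆ Set.Iio w →
          (I.subtype (fun v => v ∈ Set.Iio w)).image Subtype.val = I := by
        intro I w hI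
        ext v
        simp only [Finset.mem_image, Finset.mem_subtype]
        constructor
        · rintro ⟨⟨u, hu⟩, h1, rfl⟩; exact h1
        · intro hv; exact ⟨⟨v, hI hv⟩, hv, rfl⟩
      have hFinj : Function.Injective F := by
        intro x y hxy
        have hval : L x = L y := congrArg (fun p : Δ => p.1.1) hxy
        have hH : ∀ I : Finset ϑ.ToType, ↑I ⊆ Set.Iio (L x) →
            f (insert x (I.image (seq (W := ϑ.ToType) f n x))) =
            f (insert y (I.image (seq (W := ϑ.ToType) f n y))) := by
          intro I hI
          have hG := congrArg (fun p : Δ =>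
            p.2 (I.subtype (fun v => v ∈ Set.Iio p.1.1))) hxy
          simp only [F] at hG
          rw [hsub I (L x) hI] at hG
          rw [hsub I (L y) (hval ▸ hI)] at hG
          exact hG
        exact eq_of_data f n x y (L x) (hLmem x) (hval ▸ hLmem y)
          (hLmin x) (fun v hv => hLmin y v (hval ▸ hv)) hH
      have hcard : #α ≤ #Δ := mk_le_of_injective hFinj
      have hbound : ∀ w : ↥(Set.Iio wstar), #(Finset ↥(Set.Iio w.1) → C) ≤ 2 ^ μ := by
        intro w
        have h1 : #(Finset ↥(Set.Iio w.1)) ≤ μ := by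
          rcases finite_or_infinite ↥(Set.Iio w.1) with h | h
          · haveI := h
            haveI := Fintype.ofFinite ↥(Set.Iio w.1)
            exact le_trans (lt_aleph0_of_finite _).le hμ
          · rw [mk_finset_of_infinite]; exact hbelow w.1 w.2
        have h2 : #(Finset ↥(Set.Iio w.1) → C) = #C ^ #(Finset ↥(Set.Iio w.1)) :=
          (power_def _ _).symm
        rw [h2, hC]
        calc κ ^ #(Finset ↥(Set.Iio w.1)) ≤ (2 ^ μ) ^ #(Finset ↥(Set.Iio w.1)) :=
              power_le_power_right (hκμ.trans (cantor μ).le)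
          _ ≤ (2 ^ μ) ^ μ := by
              refine power_le_power_left ?_ h1
              exact ne_of_gt (lt_of_lt_of_le aleph0_pos hμ2)
          _ = 2 ^ (μ * μ) := by rw [← power_mul]
          _ = 2 ^ μ := by rw [mul_eq_self hμ]
      have hΔle : #Δ ≤ 2 ^ μ := by
        rw [hΔdef, mk_sigma]
        calc (sum fun w : ↥(Set.Iio wstar) => #(Finset ↥(Set.Iio w.1) → C))
            ≤ sum fun _ : ↥(Set.Iio wstar) => (2:Cardinal) ^ μ := sum_le_sum _ _ hbound
          _ = #(↥(Set.Iio wstar)) * 2 ^ μ := sum_const' _ _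
          _ = Order.succ μ * 2 ^ μ := by rw [hIiowstar]
          _ ≤ 2 ^ μ * 2 ^ μ := by
              exact mul_le_mul_left (Order.succ_le_of_lt (cantor μ)) _
          _ = 2 ^ μ := mul_eq_self hμ2
      have : #α ≤ 2 ^ μ := hcard.trans hΔle
      rw [hα] at this
      exact absurd this (not_le.2 (Order.lt_succ _))
    obtain ⟨x, hx⟩ := hmain
    -- apply the induction hypothesis to the initial segment below wstar
    set u : ↥(Set.Iio wstar) → α := fun w => seq (W := ϑ.ToType) f n x w.1 with hudef
    have huinj : Function.Injective u := by
      intro a b hab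
      by_contra hne
      have hne' : a.1 ≠ b.1 := fun h => hne (Subtype.ext h)
      have hla : a.1 ≤ L x := le_of_lt (lt_of_lt_of_le a.2 hx)
      have hlb : b.1 ≤ L x := le_of_lt (lt_of_lt_of_le b.2 hx)
      rcases lt_or_gt_of_ne hne' with hlt | hlt
      · exact hinj x a.1 b.1 hlt hlb hab
      · exact hinj x b.1 a.1 hlt hla hab.symm
    set g : Finset ↥(Set.Iio wstar) → C := fun J => f (insert x (J.image u)) with hgdef
    obtain ⟨Y, hY1, hY2⟩ := IH ↥(Set.Iio wstar) C (by rw [hIiowstar]) hC g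
    refine ⟨u '' Y, ?_, ?_⟩
    · rw [mk_image_eq huinj]
      exact hY1
    · have key : ∀ J : Finset ↥(Set.Iio wstar), ↑J ⊆ Y → J.card = n + 1 →
          ∃ J' : Finset ↥(Set.Iio wstar), ↑J' ⊆ Y ∧ J'.card = m + 1 ∧
            f (J.image u) = g J' := by
        intro J hJY hJcard
        have hJne : J.Nonempty := Finset.card_pos.1 (by rw [hJcard]; exact Nat.succ_pos _)
        set j := J.max' hJne with hjdef
        have hjmem : j ∈ J := J.max'_mem hJne
        set J' := J.erase j with hJ'def
        have hJ'card : J'.card = m + 1 := by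
          rw [hJ'def, Finset.card_erase_of_mem hjmem, hJcard]
          omega
        refine ⟨J', fun v hv => hJY (Finset.erase_subset _ _ hv), hJ'card, ?_⟩
        have hJins : J = insert j J' := (Finset.insert_erase hjmem).symm
        set I : Finset ϑ.ToType := J'.image Subtype.val with hIdef
        have hIsub : ↑I ⊆ Set.Iio j.1 := by
          intro v hv
          simp only [hIdef, Finset.coe_image, Set.mem_image] at hv
          obtain ⟨p, hp, rfl⟩ := hv
          have h1 : p ≠ j := Finset.ne_of_mem_erase hp
          have h2 : p ≤ j := J.le_max' p (Finset.mem_of_mem_erase hp)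
          have h3 : p < j := lt_of_le_of_ne h2 h1
          exact Set.mem_Iio.2 (by exact_mod_cast h3)
        have hIcard : I.card = n := by
          rw [hIdef, Finset.card_image_of_injective _ Subtype.val_injective, hJ'card]
        have hIimg : I.image (seq (W := ϑ.ToType) f n x) = J'.image u := by
          rw [hIdef, Finset.image_image]
          rfl
        have hjL : j.1 ≤ L x := le_of_lt (lt_of_lt_of_le j.2 hx)
        have hQ := (seq_mem_Qset f n x j.1
          (fun v hv => hLmin x v (lt_of_lt_of_le hv hjL))).2 I hIsub hIcard
        rw [hIimg] at hQ
        calc f (J.image u) = f (insert (u j) (J'.image u)) := by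
              rw [hJins, Finset.image_insert]
          _ = f (insert x (J'.image u)) := hQ
          _ = g J' := rfl
      intro s t hs ht hscard htcard
      obtain ⟨Js, hJs, hJsimg⟩ := Finset.subset_set_image_iff.1 hs
      obtain ⟨Jt, hJt, hJtimg⟩ := Finset.subset_set_image_iff.1 ht
      have hJscard : Js.card = n + 1 := by
        rw [← hscard, ← hJsimg]
        exact (Finset.card_image_of_injective _ huinj).symm
      have hJtcard : Jt.card = n + 1 := by
        rw [← htcard, ← hJtimg]
        exact (Finset.card_image_of_injective _ huinj).symm
      obtain ⟨Js', hJs'Y, hJs'card, hJs'eq⟩ := key Js hJs hJscard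
      obtain ⟨Jt', hJt'Y, hJt'card, hJt'eq⟩ := key Jt hJt hJtcard
      rw [← hJsimg, ← hJtimg, hJs'eq, hJt'eq]
      exact hY2 Js' Jt' hJs'Y hJt'Y hJs'card hJt'card

end ErdosRado

open ErdosRado in
/-- The Erdős–Rado theorem: for every infinite cardinal `κ` and `n ≥ 1`,
`(beth_{n-1}(κ))⁺ → (κ⁺)^n_κ`. -/
theorem stmt1 (κ : Cardinal) (hκ : ℵ₀ ≤ κ) (n : ℕ) (hn : 1 ≤ n)
    (α C : Type) (hα : #α = Order.succ ((fun x : Cardinal => 2 ^ x)^[n - 1] κ))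
    (hC : #C = κ) (f : Finset α → C) :
    ∃ X : Set α, Order.succ κ ≤ #X ∧
      ∀ s t : Finset α, ↑s ⊆ X → ↑t ⊆ X → s.card = n → t.card = n → f s = f t := by
  classical
  obtain ⟨m, rfl⟩ : ∃ m, n = m + 1 := ⟨n - 1, by omega⟩
  simpa using main κ hκ m α C (by simpa using hα) hC f
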